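/- No finite nonabelian simple group is a gpnf-group of type (2,…,2,n): there is no finite nonabelian simple group G, integer n ≥ 2, and elements a₁,…,a_r ∈ G with a₁,…,a_{r−1} of order 2 and a_r of order n, which generate G, satisfy a₁a₂⋯a_r = 1, and are such that every element of G is conjugate in G to a power of some aᵢ. -/

import Mathlib

/-- A finite group is not the union of the conjugates of a proper subgroup. -/
private lemma jordan_cover {G : Type*} [Group G] [Fintype G] (H : Subgroup G)
    (hne : H ≠ ⊤) (hcov : ∀ g : G, ∃ x : G, x⁻¹ * g * x ∈ H) : False := by
  classical
  obtain ⟨g₀, hg₀⟩ : ∃ g : G, g ∉ H := by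
    by_contra hcon
    push_neg at hcon
    exact hne ((Subgroup.eq_top_iff' H).mpr hcon)
  haveI : Fintype (G ⧸ H) := Fintype.ofFinite _
  have hQ2 : 2 ≤ Fintype.card (G ⧸ H) := by
    have hne' : ((g₀ : G) : G ⧸ H) ≠ ((1 : G) : G ⧸ H) := by
      intro h
      exact hg₀ (by simpa using QuotientGroup.eq.mp h)
    exact Fintype.one_lt_card_iff_nontrivial.mpr ⟨_, _, hne'⟩
  set F : G ⧸ H → Finset G := fun q =>
    Finset.univ.filter (fun g => g ≠ 1 ∧ (Quotient.out q)⁻¹ * g * (Quotient.out q) ∈ H) with hF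
  have hcover : (Finset.univ.erase (1 : G)) ⊆ Finset.univ.biUnion F := by
    intro g hg
    have hg1 : g ≠ 1 := (Finset.mem_erase.mp hg).1
    obtain ⟨x, hx⟩ := hcov g
    refine Finset.mem_biUnion.mpr ⟨((x : G) : G ⧸ H), Finset.mem_univ _, ?_⟩
    rw [hF]
    refine Finset.mem_filter.mpr ⟨Finset.mem_univ _, hg1, ?_⟩
    set y := Quotient.out ((x : G) : G ⧸ H) with hy
    have hxy : ((x : G) : G ⧸ H) = ((y : G) : G ⧸ H) := (Quotient.out_eq _).symm
    have hmem : x⁻¹ * y ∈ H := QuotientGroup.eq.mp hxy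
    have hrw : y⁻¹ * g * y = (x⁻¹ * y)⁻¹ * (x⁻¹ * g * x) * (x⁻¹ * y) := by group
    rw [hrw]
    exact H.mul_mem (H.mul_mem (H.inv_mem hmem) hx) hmem
  have hcard1 : ∀ q, (F q).card ≤ Fintype.card H - 1 := by
    intro q
    have hinj : Set.InjOn (fun g => (Quotient.out q)⁻¹ * g * (Quotient.out q)) (F q) := by
      intro u hu v hv huv
      simp only at huv
      have := mul_right_cancel huv
      exact mul_left_cancel this
    have hmaps : ∀ g ∈ F q, (Quotient.out q)⁻¹ * g * (Quotient.out q) ∈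
        (Finset.univ.filter (fun h : G => h ∈ H)).erase 1 := by
      intro g hg
      rw [hF] at hg
      obtain ⟨-, hg1, hgH⟩ := Finset.mem_filter.mp hg
      refine Finset.mem_erase.mpr ⟨?_, Finset.mem_filter.mpr ⟨Finset.mem_univ _, hgH⟩⟩
      intro h1
      apply hg1
      have h2 : (Quotient.out q) * ((Quotient.out q)⁻¹ * g * (Quotient.out q)) * (Quotient.out q)⁻¹
          = (Quotient.out q) * 1 * (Quotient.out q)⁻¹ := by rw [h1]
      simpa [mul_assoc] using h2
    calc (F q).card ≤ ((Finset.univ.filter (fun h : G => h ∈ H)).erase 1).card :=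
          Finset.card_le_card_of_injOn _ hmaps hinj
      _ = (Finset.univ.filter (fun h : G => h ∈ H)).card - 1 :=
          Finset.card_erase_of_mem (by simp [H.one_mem])
      _ = Fintype.card H - 1 := by rw [Fintype.card_subtype]
  have hGH : Fintype.card G = Fintype.card (G ⧸ H) * Fintype.card H := by
    have := Subgroup.card_eq_card_quotient_mul_card_subgroup H
    simpa [Nat.card_eq_fintype_card] using this
  have hbig : Fintype.card G - 1 ≤ Fintype.card (G ⧸ H) * (Fintype.card H - 1) := by
    calc Fintype.card G - 1 = (Finset.univ.erase (1:G)).card := by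
          rw [Finset.card_erase_of_mem (Finset.mem_univ _), Finset.card_univ]
      _ ≤ (Finset.univ.biUnion F).card := Finset.card_le_card hcover
      _ ≤ ∑ q, (F q).card := Finset.card_biUnion_le
      _ ≤ ∑ _q : G ⧸ H, (Fintype.card H - 1) := Finset.sum_le_sum (fun q _ => hcard1 q)
      _ = Fintype.card (G ⧸ H) * (Fintype.card H - 1) := by
          rw [Finset.sum_const, Finset.card_univ, smul_eq_mul]
  have hH1 : 1 ≤ Fintype.card H := Fintype.card_pos
  obtain ⟨h', hh'⟩ : ∃ h', Fintype.card H = h' + 1 := ⟨_, (Nat.succ_pred_eq_of_pos hH1).symm⟩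
  rw [hh'] at hGH hbig
  simp only [Nat.add_sub_cancel] at hbig
  rw [Nat.mul_add, mul_one] at hGH
  have hA : Fintype.card (G ⧸ H) * h' + Fintype.card (G ⧸ H) - 1
      ≤ Fintype.card (G ⧸ H) * h' := by rw [← hGH]; exact hbig
  omega

/-- No finite nonabelian simple group is a gpnf-group of type `(2,…,2,n)`:
there is no finite nonabelian simple group `G`, integer `n ≥ 2`, and elements
`a 0, …, a r` of `G`, with `a 0, …, a (r-1)` of order `2` and the last one of order `n`,
which generate `G`, have product `1`, and are such that every element of `G` is conjugate
to a power of some `a i`. -/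
theorem stmt_4 {G : Type*} [Group G] [Fintype G] [IsSimpleGroup G]
    (hnab : ¬ ∀ g h : G, g * h = h * g)
    (n : ℕ) (hn : 2 ≤ n) (r : ℕ) (a : Fin (r + 1) → G)
    (horders : ∀ i : Fin r, orderOf (a i.castSucc) = 2)
    (hlast : orderOf (a (Fin.last r)) = n)
    (hgen : Subgroup.closure (Set.range a) = ⊤)
    (hprod : (List.ofFn a).prod = 1)
    (hgpnf : ∀ g : G, ∃ i, ∃ k : ℕ, IsConj (a i ^ k) g) :
    False := by
  classical
  set c : G := a (Fin.last r) with hc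
  have horderc : orderOf c = n := hlast
  have hcn : c ^ n = 1 := by rw [← horderc]; exact pow_orderOf_eq_one c
  -- classification of elements
  have hclass : ∀ g : G, g * g = 1 ∨ ∃ γ : G, ∃ k : ℕ, γ * c ^ k * γ⁻¹ = g := by
    intro g
    obtain ⟨i, k, hik⟩ := hgpnf g
    obtain ⟨γ, hγ⟩ := isConj_iff.mp hik
    by_cases hi : i = Fin.last r
    · right; exact ⟨γ, k, by rw [← hγ, hi]⟩
    · left
      have h2 : a i * a i = 1 := by
        have h := horders (i.castPred hi)
        rw [Fin.castSucc_castPred] at h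
        calc a i * a i = a i ^ 2 := (sq (a i)).symm
          _ = 1 := by rw [← h]; exact pow_orderOf_eq_one _
      have h2k : (a i ^ k) * (a i ^ k) = 1 := by
        have e1 : a i ^ k * a i ^ k = (a i * a i) ^ k := by
          rw [← pow_add, ← sq, ← pow_mul, two_mul]
        rw [e1, h2, one_pow]
      rw [← hγ]
      calc (γ * a i ^ k * γ⁻¹) * (γ * a i ^ k * γ⁻¹)
          = γ * ((a i ^ k) * (a i ^ k)) * γ⁻¹ := by group
        _ = 1 := by rw [h2k]; group
  -- order divides n in conjugate case
  have hdvdn : ∀ (γ : G) (k : ℕ), orderOf (γ * c ^ k * γ⁻¹) ∣ n := by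
    intro γ k
    rw [orderOf_dvd_iff_pow_eq_one]
    calc (γ * c ^ k * γ⁻¹) ^ n = γ * (c ^ k) ^ n * γ⁻¹ := by rw [conj_pow]
      _ = γ * (c ^ n) ^ k * γ⁻¹ := by rw [← pow_mul, ← pow_mul, mul_comm k n]
      _ = 1 := by rw [hcn, one_pow]; group
  -- trivial center
  have hmemcenter : ∀ u : G, (∀ h : G, h * u = u * h) → u = 1 := by
    intro u hu
    have hmem : u ∈ Subgroup.center G := Subgroup.mem_center_iff.mpr hu
    rcases IsSimpleGroup.eq_bot_or_eq_top_of_normal (Subgroup.center G)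
      (inferInstance) with h | h
    · rw [h] at hmem; exact Subgroup.mem_bot.mp hmem
    · exfalso; apply hnab; intro g h'
      have hg : g ∈ Subgroup.center G := by rw [h]; trivial
      exact (Subgroup.mem_center_iff.mp hg h').symm
  rcases Nat.even_or_odd n with hev | hodd
  · -- EVEN CASE: u := c^m with n = m + m is the unique involution of ⟨c⟩
    obtain ⟨m, hm⟩ := hev
    have hmpos : 0 < m := by omega
    set u : G := c ^ m with hu
    have hu2 : u * u = 1 := by rw [hu, ← pow_add, ← hm, hcn]
    have hune : u ≠ 1 := by
      intro h1
      have hdv : orderOf c ∣ m := orderOf_dvd_of_pow_eq_one h1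
      rw [horderc] at hdv
      have := Nat.le_of_dvd hmpos hdv
      omega
    have huinv : u⁻¹ = u := inv_eq_of_mul_eq_one_right hu2
    -- uniqueness of the involution in ⟨c⟩
    have huniq : ∀ l : ℕ, c ^ l * c ^ l = 1 → c ^ l = 1 ∨ c ^ l = u := by
      intro l hl
      have hdv : orderOf c ∣ l + l := orderOf_dvd_of_pow_eq_one (by rw [pow_add]; exact hl)
      rw [horderc, hm] at hdv
      have hml : m ∣ l := by
        obtain ⟨s, hs⟩ := hdv
        have hs2 : l + l = m * s + m * s := by rw [hs]; ring
        exact ⟨s, by omega⟩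
      obtain ⟨s, rfl⟩ := hml
      rcases Nat.even_or_odd s with ⟨s', hs'⟩ | ⟨s', hs'⟩
      · left
        rw [hs', show m * (s' + s') = (m + m) * s' by ring, pow_mul, ← hm, hcn, one_pow]
      · right
        rw [hs', show m * (2 * s' + 1) = (m + m) * s' + m by ring, pow_add, pow_mul,
          ← hm, hcn, one_pow, one_mul]
    -- the centralizer of u is proper
    set H : Subgroup G := Subgroup.centralizer {u} with hH
    have hHne : H ≠ ⊤ := by
      intro htop
      apply hune
      apply hmemcenter
      intro h
      have hmem : h ∈ H := htop ▸ Subgroup.mem_top h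
      exact (Subgroup.mem_centralizer_iff.mp hmem u rfl).symm
    -- coverage
    have hcov : ∀ g : G, ∃ x : G, x⁻¹ * g * x ∈ H := by
      intro g
      have hmemH : ∀ z : G, u * z = z * u → z ∈ H := by
        intro z hz
        rw [hH]
        rw [Subgroup.mem_centralizer_iff]
        intro y hy
        rw [Set.mem_singleton_iff] at hy
        rw [hy]; exact hz
      rcases hclass g with hg2 | ⟨γ, k, hγ⟩
      · -- involution case
        have hginv : g⁻¹ = g := inv_eq_of_mul_eq_one_right hg2
        by_cases hgu : u * g = g * u
        · exact ⟨1, by simpa using hmemH g hgu⟩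
        set w : G := g * u with hw
        have hw2 : ¬ (w * w = 1) := by
          intro hww
          apply hgu
          have hwinv : w⁻¹ = w := inv_eq_of_mul_eq_one_right hww
          calc u * g = u⁻¹ * g⁻¹ := by rw [huinv, hginv]
            _ = w⁻¹ := by rw [hw]; group
            _ = w := hwinv
            _ = g * u := hw
        rcases hclass w with hww | ⟨δ, l, hδ⟩
        · exact absurd hww hw2
        have hwne : w ≠ 1 := by intro h1; rw [h1] at hw2; exact hw2 (one_mul 1)
        have hgwg : g * w * g⁻¹ = w⁻¹ := by
          rw [hginv, hw]
          calc g * (g * u) * g = (g * g) * (u * g) := by group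
            _ = u * g := by rw [hg2]; group
            _ = u⁻¹ * g⁻¹ := by rw [huinv, hginv]
            _ = (g * u)⁻¹ := by group
        set d := orderOf w with hd
        have hdn : d ∣ n := by rw [hd, ← hδ]; exact hdvdn δ l
        have hdpos : 0 < d := orderOf_pos w
        have hd2 : ¬ d ∣ 2 := by
          intro hdvd
          apply hw2
          have h2 : w ^ 2 = 1 := by
            apply orderOf_dvd_iff_pow_eq_one.mp
            rw [← hd]; exact hdvd
          rw [← sq]; exact h2
        have hd3 : 3 ≤ d := by
          by_contra hlt
          push_neg at hlt
          interval_cases d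
          · exact absurd (one_dvd 2) hd2
          · exact absurd (dvd_refl 2) hd2
        have hwd : w ^ d = 1 := by rw [hd]; exact pow_orderOf_eq_one w
        rcases Nat.even_or_odd d with ⟨e, he⟩ | ⟨e, he⟩
        · -- d even: w^e is an involution commuting with g, conjugate of u
          set w' : G := w ^ e with hw'
          have hw'2 : w' * w' = 1 := by rw [hw', ← pow_add, ← he, hwd]
          have hw'ne : w' ≠ 1 := by
            intro h1
            have hdv : d ∣ e := hd ▸ orderOf_dvd_of_pow_eq_one h1
            have := Nat.le_of_dvd (by omega) hdv
            omega
          have hgw' : g * w' * g⁻¹ = w' := by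
            have h1 : g * w' * g⁻¹ = (g * w * g⁻¹) ^ e := by rw [hw', conj_pow]
            rw [h1, hgwg, inv_pow, ← hw']
            exact inv_eq_of_mul_eq_one_right hw'2
          -- w' = δ * c^(l*e) * δ⁻¹ and c^(l*e) = u
          have hw'c : w' = δ * c ^ (l * e) * δ⁻¹ := by
            rw [hw', ← hδ, pow_mul]
            exact conj_pow
          have hcle : c ^ (l * e) * c ^ (l * e) = 1 := by
            have h1 : δ * (c ^ (l * e) * c ^ (l * e)) * δ⁻¹ = 1 := by
              calc δ * (c ^ (l * e) * c ^ (l * e)) * δ⁻¹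
                  = (δ * c ^ (l * e) * δ⁻¹) * (δ * c ^ (l * e) * δ⁻¹) := by group
                _ = w' * w' := by rw [← hw'c]
                _ = 1 := hw'2
            calc c ^ (l * e) * c ^ (l * e)
                = δ⁻¹ * (δ * (c ^ (l * e) * c ^ (l * e)) * δ⁻¹) * δ := by group
              _ = 1 := by rw [h1]; group
          rcases huniq (l * e) hcle with h1 | h1
          · exfalso; apply hw'ne; rw [hw'c, h1]; group
          · -- then w' = δ u δ⁻¹; g commutes with it
            refine ⟨δ, hmemH _ ?_⟩
            have h2 : δ * u * δ⁻¹ = w' := by rw [hw'c, h1]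
            have h3 : (δ * u * δ⁻¹) * g = g * (δ * u * δ⁻¹) := by
              rw [h2]
              have := hgw'
              calc w' * g = g * (g⁻¹ * w' * g) := by group
                _ = g * (g * w' * g⁻¹) := by rw [hginv]
                _ = g * w' := by rw [hgw']
            calc u * (δ⁻¹ * g * δ) = δ⁻¹ * ((δ * u * δ⁻¹) * g) * δ := by group
              _ = δ⁻¹ * (g * (δ * u * δ⁻¹)) * δ := by rw [h3]
              _ = (δ⁻¹ * g * δ) * u := by group
        · -- d odd: g is conjugate to u by w^(e+1)
          refine ⟨w ^ (e + 1), ?_⟩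
          have hx : g * w ^ (e + 1) * g⁻¹ = (w ^ (e + 1))⁻¹ := by
            rw [← conj_pow, hgwg, inv_pow]
          have hxx : w ^ (e + 1) * w ^ (e + 1) = w := by
            rw [← pow_add, show e + 1 + (e + 1) = (2 * e + 1) + 1 by ring, ← he, pow_succ, hwd,
              one_mul]
          have hkey : (w ^ (e + 1))⁻¹ * g * w ^ (e + 1) = u := by
            have h1 : g * w ^ (e + 1) = (w ^ (e + 1))⁻¹ * g := by
              calc g * w ^ (e + 1) = (g * w ^ (e + 1) * g⁻¹) * g := by group
                _ = (w ^ (e + 1))⁻¹ * g := by rw [hx]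
            calc (w ^ (e + 1))⁻¹ * g * w ^ (e + 1)
                = (w ^ (e + 1))⁻¹ * (g * w ^ (e + 1)) := by group
              _ = (w ^ (e + 1))⁻¹ * ((w ^ (e + 1))⁻¹ * g) := by rw [h1]
              _ = (w ^ (e + 1) * w ^ (e + 1))⁻¹ * g := by group
              _ = w⁻¹ * g := by rw [hxx]
              _ = (g * u)⁻¹ * g := by rw [hw]
              _ = u⁻¹ * (g⁻¹ * g) := by group
              _ = u := by rw [huinv]; group
          rw [hkey]
          exact hmemH u rfl
      · -- conjugate-of-power-of-c case: c^k commutes with u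
        refine ⟨γ, hmemH _ ?_⟩
        have h1 : γ⁻¹ * (γ * c ^ k * γ⁻¹) * γ = c ^ k := by group
        rw [← hγ, h1, hu, ← pow_add, ← pow_add, Nat.add_comm]
    exact jordan_cover H hHne hcov
  · -- ODD CASE
    have hcne : c ≠ 1 := by
      intro h
      rw [h, orderOf_one] at horderc
      omega
    set C : Subgroup G := Subgroup.zpowers c with hC
    set M : Subgroup G := Subgroup.normalizer (C : Set G) with hM
    have hMne : M ≠ ⊤ := by
      intro htop
      have hnorm : C.Normal := Subgroup.normalizer_eq_top_iff.mp htop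
      rcases IsSimpleGroup.eq_bot_or_eq_top_of_normal C hnorm with h | h
      · apply hcne
        have hmem : c ∈ C := Subgroup.mem_zpowers c
        rw [h] at hmem
        exact Subgroup.mem_bot.mp hmem
      · apply hnab
        intro g h'
        obtain ⟨i, hi⟩ := Subgroup.mem_zpowers_iff.mp (h ▸ Subgroup.mem_top g : g ∈ C)
        obtain ⟨j, hj⟩ := Subgroup.mem_zpowers_iff.mp (h ▸ Subgroup.mem_top h' : h' ∈ C)
        rw [← hi, ← hj, ← zpow_add, ← zpow_add, add_comm]
    have hoddord : ∀ (γ : G) (k : ℕ), Odd (orderOf (γ * c ^ k * γ⁻¹)) := by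
      intro γ k
      rcases Nat.even_or_odd (orderOf (γ * c ^ k * γ⁻¹)) with hev2 | h
      · exfalso
        have h2 : (2:ℕ) ∣ orderOf (γ * c ^ k * γ⁻¹) := even_iff_two_dvd.mp hev2
        have h3 : (2:ℕ) ∣ n := h2.trans (hdvdn γ k)
        exact (Nat.not_even_iff_odd.mpr hodd) (even_iff_two_dvd.mpr h3)
      · exact h
    -- no nontrivial involution commutes with a nontrivial odd-order element
    have hcomm : ∀ t y : G, t * t = 1 → t * y = y * t → Odd (orderOf y) → y ≠ 1 → t = 1 := by
      intro t y ht hty hyodd hyne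
      have hCty : Commute t y := hty
      rcases hclass (t * y) with hin | ⟨δ, l, hδ⟩
      · have hyy : y * y = 1 := by
          have h1 : (t*y)*(t*y) = (t*t)*(y*y) := by
            calc t*y*(t*y) = t*(y*t)*y := by group
              _ = t*(t*y)*y := by rw [← hty]
              _ = (t*t)*(y*y) := by group
          have h2 : (t*t)*(y*y) = 1 := by rw [← h1]; exact hin
          rw [ht, one_mul] at h2; exact h2
        have hdv : orderOf y ∣ 2 := orderOf_dvd_of_pow_eq_one (by rw [sq]; exact hyy)
        have h1 : orderOf y = 1 := by
          rcases (Nat.dvd_prime Nat.prime_two).mp hdv with h | h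
          · exact h
          · exfalso; rw [Nat.odd_iff, h] at hyodd; omega
        exact absurd (orderOf_eq_one_iff.mp h1) hyne
      · set o := orderOf (t*y) with ho
        have hoodd : Odd o := by rw [ho, ← hδ]; exact hoddord δ l
        have hpow : (t*y)^o = t^o * y^o := hCty.mul_pow o
        have hto : t ^ o = t := by
          obtain ⟨s, hs⟩ := hoodd
          rw [hs, pow_add, pow_mul, pow_one, sq, ht, one_pow, one_mul]
        have h1 : t * y ^ o = 1 := by
          rw [← hto, ← hpow, ho]; exact pow_orderOf_eq_one _
        have ht2 : t = (y ^ o)⁻¹ := mul_eq_one_iff_eq_inv.mp h1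
        have hdt : orderOf t ∣ orderOf y := by
          rw [ht2, orderOf_inv]
          apply orderOf_dvd_iff_pow_eq_one.mpr
          rw [← pow_mul, mul_comm, pow_mul, pow_orderOf_eq_one, one_pow]
        have hdt2 : orderOf t ∣ 2 := orderOf_dvd_of_pow_eq_one (by rw [sq]; exact ht)
        have h1' : orderOf t = 1 := by
          rcases (Nat.dvd_prime Nat.prime_two).mp hdt2 with h | h
          · exact h
          · exfalso
            have h2 : (2:ℕ) ∣ orderOf y := h ▸ hdt
            rw [Nat.odd_iff] at hyodd
            omega
        exact orderOf_eq_one_iff.mp h1'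
    -- coverage by conjugates of the normalizer
    have hcovM : ∀ g : G, ∃ x : G, x⁻¹ * g * x ∈ M := by
      intro g
      rcases hclass g with hg2 | ⟨γ, k, hγ⟩
      swap
      · refine ⟨γ, ?_⟩
        have h1 : γ⁻¹ * g * γ = c ^ k := by rw [← hγ]; group
        rw [h1]
        exact Subgroup.le_normalizer (Subgroup.pow_mem C (Subgroup.mem_zpowers c) k)
      by_cases hg1 : g = 1
      · refine ⟨1, ?_⟩
        rw [hg1]
        simpa using M.one_mem
      have hginv : g⁻¹ = g := inv_eq_of_mul_eq_one_right hg2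
      -- find an involution not commuting with g
      have hex : ∃ w : G, w * w = 1 ∧ ¬ (w * g = g * w) := by
        by_contra hcon
        push_neg at hcon
        apply hg1
        apply hmemcenter
        set S : Set G := {w : G | w * w = 1} with hS
        set K : Subgroup G := Subgroup.closure S with hK
        have hKnormal : K.Normal := by
          constructor
          intro x hx g'
          have hsub : K.map (MulAut.conj g').toMonoidHom ≤ K := by
            rw [hK, MonoidHom.map_closure]
            apply Subgroup.closure_mono
            rintro _ ⟨z, hz, rfl⟩
            have hz2 : z * z = 1 := hz
            show ((MulAut.conj g').toMonoidHom z) * ((MulAut.conj g').toMonoidHom z) = 1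
            simp only [MulEquiv.coe_toMonoidHom, MulAut.conj_apply]
            calc g' * z * g'⁻¹ * (g' * z * g'⁻¹) = g' * (z * z) * g'⁻¹ := by group
              _ = 1 := by rw [hz2]; group
          have hmem : (MulAut.conj g').toMonoidHom x ∈ K :=
            hsub (Subgroup.mem_map_of_mem _ hx)
          simpa [MulAut.conj_apply] using hmem
        have hgK : g ∈ K := Subgroup.subset_closure hg2
        have hKtop : K = ⊤ := by
          rcases IsSimpleGroup.eq_bot_or_eq_top_of_normal K hKnormal with h | h
          · exfalso; apply hg1; rw [h] at hgK; exact Subgroup.mem_bot.mp hgK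
          · exact h
        intro h
        have hh : h ∈ K := hKtop ▸ Subgroup.mem_top h
        have hle : K ≤ Subgroup.centralizer {g} := by
          rw [hK]
          apply (Subgroup.closure_le _).mpr
          intro w hw
          rw [SetLike.mem_coe, Subgroup.mem_centralizer_iff]
          intro y hy
          rw [Set.mem_singleton_iff] at hy
          rw [hy]
          exact (hcon w hw).symm
        exact (Subgroup.mem_centralizer_iff.mp (hle hh) g rfl).symm
      obtain ⟨w, hw2, hwnc⟩ := hex
      have hwinv : w⁻¹ = w := inv_eq_of_mul_eq_one_right hw2
      set x₀ : G := g * w with hx₀def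
      have hx₀2 : ¬ (x₀ * x₀ = 1) := by
        intro h
        apply hwnc
        have hxinv : (g*w)⁻¹ = g*w := inv_eq_of_mul_eq_one_right h
        calc w * g = w⁻¹ * g⁻¹ := by rw [hwinv, hginv]
          _ = (g*w)⁻¹ := by group
          _ = g * w := hxinv
      have hx₀ne : x₀ ≠ 1 := by
        intro h
        apply hx₀2
        rw [h, one_mul]
      rcases hclass x₀ with h | ⟨γ, k, hγ⟩
      · exact absurd h hx₀2
      have hx₀odd : Odd (orderOf x₀) := by rw [← hγ]; exact hoddord γ k
      have hgx₀ : g * x₀ * g⁻¹ = x₀⁻¹ := by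
        rw [hginv, hx₀def]
        calc g * (g * w) * g = (g * g) * (w * g) := by group
          _ = w * g := by rw [hg2]; group
          _ = w⁻¹ * g⁻¹ := by rw [hwinv, hginv]
          _ = (g * w)⁻¹ := by group
      have hgx₀' : g * x₀ * g = x₀⁻¹ := by
        have h := hgx₀
        rw [hginv] at h
        exact h
      have hstar : g⁻¹ * x₀ * g = x₀⁻¹ := by rw [hginv]; exact hgx₀'
      have hstar2 : g * x₀⁻¹ * g⁻¹ = x₀ := by
        rw [← hgx₀]
        calc g * (g * x₀ * g⁻¹) * g⁻¹ = (g * g) * x₀ * (g * g)⁻¹ := by group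
          _ = x₀ := by rw [hg2]; group
      set W : Subgroup G := Subgroup.centralizer {x₀} with hW
      have hWmem : ∀ y : G, y ∈ W ↔ x₀ * y = y * x₀ := by
        intro y
        rw [hW, Subgroup.mem_centralizer_iff]
        constructor
        · intro h; exact h x₀ rfl
        · intro h z hz; rw [Set.mem_singleton_iff] at hz; rw [hz]; exact h
      -- no nontrivial element of W commutes with g
      have hA : ∀ y : G, y ∈ W → g * y = y * g → y = 1 := by
        intro y hyW hyg
        by_contra hyne
        rcases hclass y with hy2 | ⟨δ, l, hδ⟩
        · have h1 : y = 1 := hcomm y x₀ hy2 ((hWmem y).mp hyW).symm hx₀odd hx₀ne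
          exact hyne h1
        · have hyodd : Odd (orderOf y) := by rw [← hδ]; exact hoddord δ l
          exact hg1 (hcomm g y hg2 hyg hyodd hyne)
      -- W is g-invariant
      have hB : ∀ y : G, y ∈ W → g * y * g⁻¹ ∈ W := by
        intro y hy
        have hcom : Commute x₀ y := (hWmem y).mp hy
        rw [hWmem]
        calc x₀ * (g * y * g⁻¹) = g * ((g⁻¹ * x₀ * g) * y) * g⁻¹ := by group
          _ = g * (x₀⁻¹ * y) * g⁻¹ := by rw [hstar]
          _ = g * (y * x₀⁻¹) * g⁻¹ := by rw [hcom.inv_left.eq]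
          _ = (g * y * g⁻¹) * (g * x₀⁻¹ * g⁻¹) := by group
          _ = (g * y * g⁻¹) * x₀ := by rw [hstar2]
      -- the map y ↦ y⁻¹ · (g y g⁻¹) on W is injective, hence surjective
      set φ : W → W := fun y =>
        ⟨(y : G)⁻¹ * (g * (y : G) * g⁻¹), W.mul_mem (W.inv_mem y.2) (hB _ y.2)⟩ with hφ
      have hφinj : Function.Injective φ := by
        intro y z hyz
        have h1 : (y : G)⁻¹ * (g * (y : G) * g⁻¹) = (z : G)⁻¹ * (g * (z : G) * g⁻¹) := by
          have := congrArg (fun t : W => (t : G)) hyz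
          simpa [hφ] using this
        have h2 : (z : G) * (y : G)⁻¹ = g * ((z : G) * (y : G)⁻¹) * g⁻¹ := by
          calc (z : G) * (y : G)⁻¹
              = (z : G) * ((y : G)⁻¹ * (g * (y : G) * g⁻¹)) * (g * (y : G) * g⁻¹)⁻¹ := by group
            _ = (z : G) * ((z : G)⁻¹ * (g * (z : G) * g⁻¹)) * (g * (y : G) * g⁻¹)⁻¹ := by rw [h1]
            _ = g * ((z : G) * (y : G)⁻¹) * g⁻¹ := by group
        have h3 : g * ((z : G) * (y : G)⁻¹) = ((z : G) * (y : G)⁻¹) * g := by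
          have h3' := congrArg (fun t => t * g) h2
          rw [h3']
          group
        have h4 : (z : G) * (y : G)⁻¹ ∈ W := W.mul_mem z.2 (W.inv_mem y.2)
        have h5 : (z : G) * (y : G)⁻¹ = 1 := hA _ h4 h3
        have h6 : (z : G) = (y : G) := by
          rw [← mul_inv_eq_one]; exact h5
        exact (Subtype.ext h6).symm
      have hφsurj : Function.Surjective φ := Finite.injective_iff_surjective.mp hφinj
      -- g inverts W
      have hinvW : ∀ v : G, v ∈ W → g * v * g⁻¹ = v⁻¹ := by
        intro v hv
        obtain ⟨y, hy⟩ := hφsurj ⟨v, hv⟩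
        have h1 : (y : G)⁻¹ * (g * (y : G) * g⁻¹) = v := by
          have := congrArg (fun t : W => (t : G)) hy
          simpa [hφ] using this
        calc g * v * g⁻¹ = g * ((y : G)⁻¹ * (g * (y : G) * g⁻¹)) * g⁻¹ := by rw [h1]
          _ = (g * (y : G)⁻¹ * g⁻¹) * ((g * g) * (y : G) * (g * g)⁻¹) := by group
          _ = (g * (y : G)⁻¹ * g⁻¹) * (y : G) := by rw [hg2]; group
          _ = ((y : G)⁻¹ * (g * (y : G) * g⁻¹))⁻¹ := by group
          _ = v⁻¹ := by rw [h1]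
      -- hence γ⁻¹ g γ normalizes ⟨c⟩
      refine ⟨γ, ?_⟩
      set x : G := γ⁻¹ * g * γ with hx
      have hxx : x * x = 1 := by
        rw [hx]
        calc γ⁻¹ * g * γ * (γ⁻¹ * g * γ) = γ⁻¹ * (g * g) * γ := by group
          _ = 1 := by rw [hg2]; group
      have hF : ∀ h : G, h ∈ C → x * h * x⁻¹ ∈ C := by
        intro h hh
        obtain ⟨j, hj⟩ := Subgroup.mem_zpowers_iff.mp hh
        have hcomm0 : Commute (c ^ j) (c ^ k) := ((Commute.refl c).zpow_left j).pow_right k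
        have hyjW : γ * c ^ j * γ⁻¹ ∈ W := by
          rw [hWmem]
          calc x₀ * (γ * c ^ j * γ⁻¹) = (γ * c ^ k * γ⁻¹) * (γ * c ^ j * γ⁻¹) := by rw [hγ]
            _ = γ * (c ^ k * c ^ j) * γ⁻¹ := by group
            _ = γ * (c ^ j * c ^ k) * γ⁻¹ := by rw [hcomm0.eq]
            _ = (γ * c ^ j * γ⁻¹) * (γ * c ^ k * γ⁻¹) := by group
            _ = (γ * c ^ j * γ⁻¹) * x₀ := by rw [hγ]
        have hinv1 : g * (γ * c ^ j * γ⁻¹) * g⁻¹ = (γ * c ^ j * γ⁻¹)⁻¹ := hinvW _ hyjW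
        have h2 : x * h * x⁻¹ = c ^ (-j) := by
          rw [← hj, hx, zpow_neg]
          calc γ⁻¹ * g * γ * c ^ j * (γ⁻¹ * g * γ)⁻¹
              = γ⁻¹ * (g * (γ * c ^ j * γ⁻¹) * g⁻¹) * γ := by group
            _ = γ⁻¹ * (γ * c ^ j * γ⁻¹)⁻¹ * γ := by rw [hinv1]
            _ = (c ^ j)⁻¹ := by group
        rw [h2]
        exact Subgroup.zpow_mem C (Subgroup.mem_zpowers c) _
      rw [hM, Subgroup.mem_normalizer_iff]
      intro h
      constructor
      · exact hF h
      · intro hmem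
        have h2 := hF _ hmem
        have h3 : x * (x * h * x⁻¹) * x⁻¹ = h := by
          calc x * (x * h * x⁻¹) * x⁻¹ = (x * x) * h * (x * x)⁻¹ := by group
            _ = h := by rw [hxx]; group
        rw [h3] at h2
        exact h2
    exact jordan_cover M hMne hcovM
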